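/- Let Φ : (0,∞) → ℝ have the Thomas–Fermi potential properties. Then S := sup_{r>0} r²·Φ(r) is finite, the function κ is uniformly bounded on [0,∞), and κ(λ) = 0 for every λ ≥ 0 with λ² ≥ S. In particular κ is a bounded function with compact support. -/

import Mathlib

open MeasureTheory Real Filter Set

/-- The semiclassical grand canonical energy
`e_G(λ,μ) = −(2/(3π)) ∫₀^∞ (Φ(r) − λ²r⁻² − μ)₊^{3/2} dr`. -/
noncomputable def eG (Φ : ℝ → ℝ) (lam μ : ℝ) : ℝ :=
  -(2 / (3 * π)) * ∫ r in Ioi (0:ℝ), (max (Φ r - lam ^ 2 / r ^ 2 - μ) 0) ^ ((3:ℝ)/2)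

/-- The semiclassical counting function
`n(λ,μ) = (1/π) ∫₀^∞ (Φ(r) − λ²r⁻² − μ)₊^{1/2} dr`. -/
noncomputable def nSC (Φ : ℝ → ℝ) (lam μ : ℝ) : ℝ :=
  (1 / π) * ∫ r in Ioi (0:ℝ), (max (Φ r - lam ^ 2 / r ^ 2 - μ) 0) ^ ((1:ℝ)/2)

/-- `Φ` has the Thomas–Fermi potential properties: continuous and positive on `(0,∞)`,
`r·Φ(r) → 1` as `r → 0+`, and `Φ(r) ≤ C r⁻⁴` for `r ≥ 1`. -/
def HasTF (Φ : ℝ → ℝ) : Prop :=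
  ContinuousOn Φ (Ioi 0) ∧ (∀ r, 0 < r → 0 < Φ r) ∧
  Tendsto (fun r => r * Φ r) (nhdsWithin 0 (Ioi 0)) (nhds 1) ∧
  ∃ C, 0 < C ∧ ∀ r, 1 ≤ r → Φ r ≤ C / r ^ 4

/-- For a Thomas–Fermi potential `Φ`, `S = sup_{r>0} r²Φ(r)` is finite,
`κ = n(·,0)` is uniformly bounded on `[0,∞)`, and `κ(λ) = 0` whenever `λ² ≥ S`;
so `κ` is bounded with compact support. -/
theorem kappa_bounded_compact_support (Φ : ℝ → ℝ) (hΦ : HasTF Φ) :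
    BddAbove ((fun r => r ^ 2 * Φ r) '' Ioi 0) ∧
    (∃ M : ℝ, ∀ lam, 0 ≤ lam → |nSC Φ lam 0| ≤ M) ∧
    (∀ lam, 0 ≤ lam → sSup ((fun r => r ^ 2 * Φ r) '' Ioi 0) ≤ lam ^ 2 →
      nSC Φ lam 0 = 0) := by
  obtain ⟨hcont, hpos, hlim, C, hC, hCC⟩ := hΦ
  -- extract δ from the limit
  have h2 : ∀ᶠ r in nhdsWithin 0 (Ioi 0), r * Φ r < 2 :=
    Filter.Tendsto.eventually_lt_const (by norm_num) hlim
  rw [Filter.eventually_iff, Metric.mem_nhdsWithin_iff] at h2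
  obtain ⟨ε, hε, h2⟩ := h2
  set δ : ℝ := min ε 1 with hδdef
  have hδ0 : 0 < δ := lt_min hε one_pos
  have hδ1 : δ ≤ 1 := min_le_right _ _
  have hδ : ∀ r, 0 < r → r < δ → r * Φ r < 2 := by
    intro r hr hrδ
    refine h2 ⟨?_, hr⟩
    simp only [Metric.mem_ball, Real.dist_eq, sub_zero, abs_of_pos hr]
    exact lt_of_lt_of_le hrδ (min_le_left _ _)
  -- bound on [δ,1]
  obtain ⟨K, hK⟩ := (isCompact_Icc (a := δ) (b := 1)).exists_bound_of_continuousOn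
    (hcont.mono (fun x hx => lt_of_lt_of_le hδ0 hx.1))
  have hK0 : 0 ≤ K := le_trans (norm_nonneg _) (hK δ ⟨le_refl _, hδ1⟩)
  have hΦK : ∀ r, δ ≤ r → r ≤ 1 → Φ r ≤ K := fun r h1 h2' =>
    le_trans (le_abs_self _) (hK r ⟨h1, h2'⟩)
  -- Part 1 : BddAbove
  have hbdd : BddAbove ((fun r => r ^ 2 * Φ r) '' Ioi 0) := by
    refine ⟨max 2 (max K C), ?_⟩
    rintro y ⟨r, hr, rfl⟩
    simp only [mem_Ioi] at hr
    show r ^ 2 * Φ r ≤ max 2 (max K C)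
    rcases lt_or_ge r δ with hrδ | hrδ
    · refine le_trans ?_ (le_max_left _ _)
      have h1 := hδ r hr hrδ
      have h2' : r ≤ 1 := le_trans hrδ.le hδ1
      nlinarith [hpos r hr, mul_pos hr (hpos r hr)]
    · rcases le_or_gt r 1 with hr1 | hr1
      · refine le_trans ?_ (le_trans (le_max_left K C) (le_max_right _ _))
        have hΦrK := hΦK r hrδ hr1
        have hr2 : r ^ 2 ≤ 1 := by nlinarith
        calc r ^ 2 * Φ r ≤ 1 * Φ r := mul_le_mul_of_nonneg_right hr2 (hpos r hr).le
          _ = Φ r := one_mul _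
          _ ≤ K := hΦrK
      · refine le_trans ?_ (le_trans (le_max_right K C) (le_max_right _ _))
        have h4 : (0:ℝ) < r ^ 4 := by positivity
        have hCr : Φ r * r ^ 4 ≤ C := (le_div_iff₀ h4).mp (hCC r hr1.le)
        have hr2 : r ^ 2 ≤ r ^ 4 := by nlinarith [sq_nonneg r, sq_nonneg (r - 1), sq_nonneg (r + 1), sq_nonneg (r ^ 2 - 1)]
        calc r ^ 2 * Φ r ≤ r ^ 4 * Φ r :=
              mul_le_mul_of_nonneg_right hr2 (hpos r hr).le
          _ = Φ r * r ^ 4 := mul_comm _ _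
          _ ≤ C := hCr
  refine ⟨hbdd, ?_, ?_⟩
  · -- Part 2 : uniform bound
    set b : ℝ → ℝ := fun r => if r < δ then 2 / r else if r ≤ 1 then K else C / r ^ 4 with hbdef
    set g : ℝ → ℝ := fun r => (b r) ^ ((1:ℝ)/2) with hgdef
    have hb_nonneg : ∀ r, 0 < r → 0 ≤ b r := by
      intro r hr
      simp only [hbdef]
      split_ifs with h1 h2'
      · positivity
      · exact hK0
      · positivity
    have hΦb : ∀ r, 0 < r → Φ r ≤ b r := by
      intro r hr
      simp only [hbdef]
      split_ifs with h1 h2'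
      · have := hδ r hr h1
        rw [le_div_iff₀ hr]; nlinarith
      · exact hΦK r (not_lt.mp h1) h2'
      · exact hCC r (not_le.mp h2').le
    -- integrability of g
    have int1 : IntegrableOn g (Ioo 0 δ) := by
      have base : IntegrableOn (fun r : ℝ => (2:ℝ) ^ ((1:ℝ)/2) * r ^ (-(1/2) : ℝ)) (Ioo 0 δ) := by
        have h := (intervalIntegral.intervalIntegrable_rpow' (a := 0) (b := δ)
          (r := (-(1/2) : ℝ)) (by norm_num)).1
        have h2 : IntegrableOn (fun r : ℝ => (2:ℝ) ^ ((1:ℝ)/2) * r ^ (-(1/2) : ℝ)) (Ioc 0 δ) :=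
          h.const_mul _
        exact h2.mono_set Ioo_subset_Ioc_self
      refine base.congr_fun (fun r hr => ?_) measurableSet_Ioo
      simp only [hgdef, hbdef, if_pos hr.2]
      rw [Real.div_rpow (by norm_num) hr.1.le, Real.rpow_neg hr.1.le]
      exact (div_eq_mul_inv _ _).symm
    have int2 : IntegrableOn g (Icc δ 1) := by
      have base : IntegrableOn (fun _ : ℝ => K ^ ((1:ℝ)/2)) (Icc δ 1) :=
        integrableOn_const measure_Icc_lt_top.ne
      refine base.congr_fun (fun r hr => ?_) measurableSet_Icc
      simp only [hgdef, hbdef, if_neg (not_lt.mpr hr.1), if_pos hr.2]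
    have int3 : IntegrableOn g (Ioi 1) := by
      have base : IntegrableOn (fun r : ℝ => C ^ ((1:ℝ)/2) * r ^ (-(2:ℝ))) (Ioi 1) :=
        (integrableOn_Ioi_rpow_of_lt (by norm_num) one_pos).const_mul _
      refine base.congr_fun (fun r hr => ?_) measurableSet_Ioi
      simp only [mem_Ioi] at hr
      have hr0 : (0:ℝ) < r := lt_trans one_pos hr
      simp only [hgdef, hbdef, if_neg (not_lt.mpr (le_trans hδ1 hr.le)),
        if_neg (not_le.mpr hr)]
      rw [Real.div_rpow hC.le (by positivity)]
      have h4eq : ((r:ℝ) ^ (4:ℕ)) ^ ((1:ℝ)/2) = r ^ (2:ℝ) := by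
        rw [← Real.rpow_natCast r 4, ← Real.rpow_mul hr0.le]; norm_num
      rw [h4eq, Real.rpow_neg hr0.le]
      exact (div_eq_mul_inv _ _).symm
    have hsub : Ioi (0:ℝ) ⊆ Ioo 0 δ ∪ Icc δ 1 ∪ Ioi 1 := by
      intro r hr
      simp only [mem_Ioi] at hr
      rcases lt_or_ge r δ with h | h
      · exact Or.inl (Or.inl ⟨hr, h⟩)
      · rcases le_or_gt r 1 with h1 | h1
        · exact Or.inl (Or.inr ⟨h, h1⟩)
        · exact Or.inr h1
    have hg_int : IntegrableOn g (Ioi 0) := ((int1.union int2).union int3).mono_set hsub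
    refine ⟨(1/π) * ∫ r in Ioi (0:ℝ), g r, ?_⟩
    intro lam hlam
    have hfg : ∀ r ∈ Ioi (0:ℝ),
        ‖(max (Φ r - lam ^ 2 / r ^ 2 - 0) 0) ^ ((1:ℝ)/2)‖ ≤ g r := by
      intro r hr
      simp only [mem_Ioi] at hr
      rw [Real.norm_of_nonneg (Real.rpow_nonneg (le_max_right _ _) _)]
      refine Real.rpow_le_rpow (le_max_right _ _) ?_ (by norm_num)
      refine max_le ?_ (hb_nonneg r hr)
      have : 0 ≤ lam ^ 2 / r ^ 2 := by positivity
      linarith [hΦb r hr]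
    have hae : ∀ᵐ r ∂(volume.restrict (Ioi (0:ℝ))),
        ‖(max (Φ r - lam ^ 2 / r ^ 2 - 0) 0) ^ ((1:ℝ)/2)‖ ≤ g r :=
      (ae_restrict_iff' measurableSet_Ioi).mpr (ae_of_all _ hfg)
    have hbound := MeasureTheory.norm_integral_le_of_norm_le hg_int hae
    rw [nSC, abs_mul, abs_of_nonneg (by positivity : (0:ℝ) ≤ 1/π)]
    rw [← Real.norm_eq_abs]
    exact mul_le_mul_of_nonneg_left hbound (by positivity)
  · -- Part 3 : vanishing
    intro lam hlam hS
    have hzero : ∀ r ∈ Ioi (0:ℝ),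
        (max (Φ r - lam ^ 2 / r ^ 2 - 0) 0) ^ ((1:ℝ)/2) = (fun _ : ℝ => (0:ℝ)) r := by
      intro r hr
      simp only [mem_Ioi] at hr
      have hmem : r ^ 2 * Φ r ∈ (fun r => r ^ 2 * Φ r) '' Ioi 0 := ⟨r, hr, rfl⟩
      have h1 : r ^ 2 * Φ r ≤ lam ^ 2 := le_trans (le_csSup hbdd hmem) hS
      have hr2 : (0:ℝ) < r ^ 2 := by positivity
      have h3 : Φ r ≤ lam ^ 2 / r ^ 2 := by
        rw [le_div_iff₀ hr2]; linarith [mul_comm (r ^ 2) (Φ r)]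
      have h4 : max (Φ r - lam ^ 2 / r ^ 2 - 0) 0 = 0 :=
        max_eq_right (by linarith)
      rw [h4, Real.zero_rpow (by norm_num : (1:ℝ)/2 ≠ 0)]
    rw [nSC, MeasureTheory.setIntegral_congr_fun measurableSet_Ioi hzero]
    simp
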